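/- arXiv:quant-ph/0302138 — 9 statements merged into one kernel-verified Lean document; each statement's English description precedes it below -/
import Mathlib

section
/- Let δ : ℝ → ℝ be integrable on [0,T] with T ≥ 0, and let H, H' : ℝ → (ℋ →L[ℂ] ℋ) be continuous families of operators such that H(t) and H'(t) are self-adjoint for every t ∈ [0,T] and ‖H(t) − H'(t)‖ ≤ δ(t) for all t ∈ [0,T]. Let U, U' : ℝ → (ℋ →L[ℂ] ℋ) satisfy U(0) = U'(0) = I and the Schrödinger equations: for every t ∈ [0,T], U has derivative −i·H(t)∘U(t) at t and U' has derivative −i·H'(t)∘U'(t) at t. Then ‖U(T) − U'(T)‖ ≤ √(2·∫₀^T δ(t) dt). -/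
open Set

/-- Auxiliary: a Schrödinger evolution with self-adjoint Hamiltonian is unitary on `[0,T]`. -/
lemma aux_unitary_evolution {H : Type*} [NormedAddCommGroup H] [InnerProductSpace ℂ H]
    [FiniteDimensional ℂ H] [Nontrivial H]
    {T : ℝ} (hT : 0 ≤ T)
    (Ham : ℝ → (H →L[ℂ] H))
    (hHsa : ∀ t ∈ Set.Icc (0:ℝ) T, IsSelfAdjoint (Ham t))
    (U : ℝ → (H →L[ℂ] H)) (hU0 : U 0 = 1)
    (hU : ∀ t ∈ Set.Icc (0:ℝ) T,
      HasDerivAt U ((-Complex.I) • ((Ham t).comp (U t))) t) :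
    ∀ t ∈ Set.Icc (0:ℝ) T, star (U t) * U t = 1 ∧ U t * star (U t) = 1 := by
  intro t ht
  -- the function W = U* U has zero derivative on [0,T]
  have hW : ∀ s ∈ Set.Icc (0:ℝ) T,
      HasDerivAt (fun s => star (U s) * U s) 0 s := by
    intro s hs
    have hd := hU s hs
    have hds : HasDerivAt (fun s => star (U s))
        (star ((-Complex.I) • ((Ham s).comp (U s)))) s := hd.star
    have := hds.mul hd
    have hsa := (hHsa s hs)
    rw [IsSelfAdjoint] at hsa
    convert this using 1
    iterate 4 rfl
    have h1 : star ((-Complex.I) • ((Ham s).comp (U s)))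
        = Complex.I • (star (U s) * Ham s) := by
      rw [star_smul, star_neg, Complex.star_def, Complex.conj_I, neg_neg]
      congr 1
      show star ((Ham s) * (U s)) = _
      rw [star_mul, hsa]
    rw [h1]
    show (0 : H →L[ℂ] H) = _
    have : ((-Complex.I) • ((Ham s).comp (U s))) = (-Complex.I) • ((Ham s) * (U s)) := rfl
    rw [this, smul_mul_assoc, mul_smul_comm, mul_assoc, neg_smul]
    abel
  -- hence W is constant equal to W 0 = 1
  have hWconst : star (U t) * U t = 1 := by
    have hcont : ContinuousOn (fun s => star (U s) * U s) (Set.Icc 0 T) :=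
      fun s hs => ((hW s hs).continuousAt).continuousWithinAt
    have := constant_of_has_deriv_right_zero hcont
      (fun s hs => ((hW s (Set.mem_Icc.mpr ⟨hs.1, le_of_lt hs.2⟩)).hasDerivWithinAt)) t ht
    rw [this, hU0]
    simp
  refine ⟨hWconst, ?_⟩
  -- injectivity, hence surjectivity in finite dimension
  have hinj : Function.Injective (U t) := by
    intro x y hxy
    have : (star (U t) * U t) x = (star (U t) * U t) y := by
      show star (U t) ((U t) x) = star (U t) ((U t) y)
      rw [hxy]
    rwa [hWconst] at this
  have hsurj : Function.Surjective (U t) := by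
    have : Function.Injective ((U t : H →ₗ[ℂ] H)) := hinj
    exact LinearMap.injective_iff_surjective.mp this
  ext y
  obtain ⟨x, hx⟩ := hsurj y
  show (U t) (star (U t) y) = y
  have : star (U t) y = x := by
    rw [← hx]
    have : star (U t) ((U t) x) = (star (U t) * U t) x := rfl
    rw [this, hWconst]; rfl
  rw [this, hx]

set_option maxHeartbeats 1000000 in
/-- **Lemma 1** (generalized from van Dam–Mosca–Vazirani): if two time-dependent
self-adjoint Hamiltonians `Ham`, `Ham'` differ in operator norm by at most `δ t`
at each time `t ∈ [0,T]`, then the unitary evolutions they induce (with the same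
initial condition `U 0 = U' 0 = 1`) satisfy
`‖U T − U' T‖ ≤ √(2 ∫₀ᵀ δ)`. -/
theorem norm_evolution_sub_evolution_le_sqrt_two_mul_integral
    {H : Type*} [NormedAddCommGroup H] [InnerProductSpace ℂ H]
    [FiniteDimensional ℂ H] [Nontrivial H]
    {T : ℝ} (hT : 0 ≤ T)
    (δ : ℝ → ℝ) (hδ : MeasureTheory.IntegrableOn δ (Set.Icc 0 T))
    (Ham Ham' : ℝ → (H →L[ℂ] H))
    (hHcont : ContinuousOn Ham (Set.Icc 0 T))
    (hH'cont : ContinuousOn Ham' (Set.Icc 0 T))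
    (hHsa : ∀ t ∈ Set.Icc (0:ℝ) T, IsSelfAdjoint (Ham t))
    (hH'sa : ∀ t ∈ Set.Icc (0:ℝ) T, IsSelfAdjoint (Ham' t))
    (hδbound : ∀ t ∈ Set.Icc (0:ℝ) T, ‖Ham t - Ham' t‖ ≤ δ t)
    (U U' : ℝ → (H →L[ℂ] H))
    (hU0 : U 0 = 1) (hU'0 : U' 0 = 1)
    (hU : ∀ t ∈ Set.Icc (0:ℝ) T,
      HasDerivAt U ((-Complex.I) • ((Ham t).comp (U t))) t)
    (hU' : ∀ t ∈ Set.Icc (0:ℝ) T,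
      HasDerivAt U' ((-Complex.I) • ((Ham' t).comp (U' t))) t) :
    ‖U T - U' T‖ ≤ Real.sqrt (2 * ∫ t in (0:ℝ)..T, δ t) := by
  have hT' : T ∈ Set.Icc (0:ℝ) T := Set.mem_Icc.mpr ⟨hT, le_refl T⟩
  have hUu := aux_unitary_evolution hT Ham hHsa U hU0 hU
  have hU'u := aux_unitary_evolution hT Ham' hH'sa U' hU'0 hU'
  have hone : ‖(1 : H →L[ℂ] H)‖ = 1 := norm_one
  -- norms of U, U' are one on [0,T]
  have hUnorm : ∀ t ∈ Set.Icc (0:ℝ) T, ‖U t‖ = 1 := by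
    intro t ht
    have h := (hUu t ht).1
    have : ‖U t‖ * ‖U t‖ = 1 := by
      rw [← CStarRing.norm_star_mul_self, h, hone]
    nlinarith [norm_nonneg (U t)]
  have hU'norm : ∀ t ∈ Set.Icc (0:ℝ) T, ‖U' t‖ = 1 := by
    intro t ht
    have h := (hU'u t ht).1
    have : ‖U' t‖ * ‖U' t‖ = 1 := by
      rw [← CStarRing.norm_star_mul_self, h, hone]
    nlinarith [norm_nonneg (U' t)]
  -- the comparison function V = U* U'
  set f : ℝ → (H →L[ℂ] H) :=
    fun t => Complex.I • (star (U t) * ((Ham t - Ham' t) * U' t)) with hf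
  have hV : ∀ t ∈ Set.Icc (0:ℝ) T,
      HasDerivAt (fun s => star (U s) * U' s) (f t) t := by
    intro t ht
    have hd := hU t ht
    have hd' := hU' t ht
    have hds : HasDerivAt (fun s => star (U s))
        (star ((-Complex.I) • ((Ham t).comp (U t)))) t := hd.star
    have := hds.mul hd'
    convert this using 1
    iterate 4 rfl
    have hsa := hHsa t ht
    rw [IsSelfAdjoint] at hsa
    have h1 : star ((-Complex.I) • ((Ham t).comp (U t)))
        = Complex.I • (star (U t) * Ham t) := by
      rw [star_smul, star_neg, Complex.star_def, Complex.conj_I, neg_neg]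
      congr 1
      show star ((Ham t) * (U t)) = _
      rw [star_mul, hsa]
    rw [hf, h1]
    have h2 : ((-Complex.I) • ((Ham' t).comp (U' t)))
        = (-Complex.I) • ((Ham' t) * (U' t)) := rfl
    show Complex.I • (star (U t) * ((Ham t - Ham' t) * U' t)) = _
    rw [h2, smul_mul_assoc, mul_smul_comm, neg_smul, mul_assoc, sub_mul, mul_sub, smul_sub]
    abel
  -- continuity of U, U' and of f on [0,T]
  have hUcont : ContinuousOn U (Set.Icc 0 T) :=
    fun s hs => ((hU s hs).continuousAt).continuousWithinAt
  have hU'cont : ContinuousOn U' (Set.Icc 0 T) :=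
    fun s hs => ((hU' s hs).continuousAt).continuousWithinAt
  have hfcont : ContinuousOn f (Set.Icc 0 T) := by
    rw [hf]
    apply ContinuousOn.fun_const_smul
    exact (continuous_star.comp_continuousOn hUcont).mul
      ((hHcont.sub hH'cont).mul hU'cont)
  have huIcc : Set.uIcc (0:ℝ) T = Set.Icc 0 T := Set.uIcc_of_le hT
  -- fundamental theorem of calculus
  have hFTC : (∫ t in (0:ℝ)..T, f t)
      = star (U T) * U' T - 1 := by
    have := intervalIntegral.integral_eq_sub_of_hasDerivAt
      (f := fun s => star (U s) * U' s) (f' := f)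
      (by rw [huIcc]; exact fun t ht => hV t ht)
      ((hfcont.mono (by rw [huIcc])).intervalIntegrable)
    rw [this]
    show star (U T) * U' T - star (U 0) * U' 0 = _
    rw [hU0, hU'0]
    simp
  -- δ is interval integrable
  have hδint : IntervalIntegrable δ MeasureTheory.volume 0 T := by
    rw [intervalIntegrable_iff_integrableOn_Ioc_of_le hT]
    exact hδ.mono_set Set.Ioc_subset_Icc_self
  have hA0' : (0:ℝ) ≤ ∫ t in (0:ℝ)..T, δ t := by
    apply intervalIntegral.integral_nonneg hT
    intro t ht
    exact (norm_nonneg _).trans (hδbound t ht)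
  -- bound the norm of V T - 1 by ∫ δ
  have hbound : ‖star (U T) * U' T - 1‖ ≤ ∫ t in (0:ℝ)..T, δ t := by
    rw [← hFTC]
    refine (intervalIntegral.norm_integral_le_abs_of_norm_le ?_ hδint).trans_eq
      (abs_of_nonneg hA0')
    have hmem := MeasureTheory.ae_restrict_mem (μ := MeasureTheory.volume)
      (measurableSet_uIoc (a := (0:ℝ)) (b := T))
    filter_upwards [hmem] with t ht
    have ht' : t ∈ Set.Icc (0:ℝ) T := by
      rw [Set.uIoc_of_le hT] at ht
      exact Set.Ioc_subset_Icc_self ht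
    rw [hf]
    calc ‖Complex.I • (star (U t) * ((Ham t - Ham' t) * U' t))‖
        = ‖star (U t) * ((Ham t - Ham' t) * U' t)‖ := by
          rw [norm_smul (β := H →L[ℂ] H) Complex.I (star (U t) * ((Ham t - Ham' t) * U' t)), Complex.norm_I, one_mul]
      _ ≤ ‖star (U t)‖ * (‖Ham t - Ham' t‖ * ‖U' t‖) :=
          (norm_mul_le _ _).trans (by gcongr; exact norm_mul_le _ _)
      _ = ‖Ham t - Ham' t‖ := by
          have h1 : ‖star (U t)‖ = ‖U t‖ := norm_star (E := H →L[ℂ] H) (U t)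
          rw [h1, hUnorm t ht', hU'norm t ht', one_mul, mul_one]
      _ ≤ δ t := hδbound t ht'
  -- pull back:  U' T - U T = U T * (V T - 1)
  have hdecomp : U' T - U T = U T * (star (U T) * U' T - 1) := by
    rw [mul_sub, ← mul_assoc, (hUu T hT').2, one_mul, mul_one]
  set A : ℝ := ∫ t in (0:ℝ)..T, δ t with hA
  have hmain : ‖U T - U' T‖ ≤ A := by
    rw [← norm_neg, neg_sub, hdecomp]
    calc ‖U T * (star (U T) * U' T - 1)‖
        ≤ ‖U T‖ * ‖star (U T) * U' T - 1‖ := norm_mul_le _ _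
      _ ≤ A := by rw [hUnorm T hT', one_mul]; exact hbound
  have htwo : ‖U T - U' T‖ ≤ 2 := by
    calc ‖U T - U' T‖ ≤ ‖U T‖ + ‖U' T‖ := norm_sub_le _ _
      _ = 2 := by rw [hUnorm T hT', hU'norm T hT']; norm_num
  have hA0 : 0 ≤ A := hA0'
  rcases le_or_gt A 2 with hc | hc
  · refine hmain.trans ?_
    rw [Real.le_sqrt hA0 (by positivity)]
    nlinarith
  · refine htwo.trans ?_
    rw [Real.le_sqrt (by norm_num) (by positivity)]
    nlinarith
end

section
/- For every t ∈ ℝ and every x ∈ Fin N, O_f ∘ (I ⊗ U_t) ∘ O_f applied to |x⟩ ⊗ |0⟩ equals (exp(−i·t·H_f)|x⟩) ⊗ |0⟩. That is, the circuit consisting of one oracle call, the phase gate U_t on the ancilla, and a second oracle call simulates the Hamiltonian evolution exp(−i·t·H_f) on the first register with the ancilla returned to |0⟩. -/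
open scoped TensorProduct

/-- The rank-one projector `|ψ⟩⟨ψ|`, mapping `v` to `⟪ψ, v⟫ • ψ`. -/
noncomputable def proj {H : Type*} [NormedAddCommGroup H] [InnerProductSpace ℂ H]
    (ψ : H) : H →L[ℂ] H := (innerSL ℂ ψ).smulRight ψ

set_option maxHeartbeats 1000000

lemma exp_eigen {H : Type*} [NormedAddCommGroup H] [InnerProductSpace ℂ H] [CompleteSpace H]
    (A : H →L[ℂ] H) (v : H) (μ : ℂ) (h : A v = μ • v) :
    NormedSpace.exp A v = Complex.exp μ • v := by
  have hn : ∀ n : ℕ, (A ^ n) v = μ ^ n • v := by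
    intro n; induction n with
    | zero => simp
    | succ n ih =>
      rw [pow_succ, ContinuousLinearMap.mul_apply, h, map_smul, ih, pow_succ,
        smul_smul, mul_comm]
  have hsum : Summable (fun n : ℕ => ((Nat.factorial n : ℂ))⁻¹ • A ^ n) :=
    NormedSpace.expSeries_summable' A
  have hsum2 : Summable (fun n : ℕ => ((Nat.factorial n : ℂ))⁻¹ * μ ^ n) := by
    have h2 := NormedSpace.expSeries_summable' (𝕂 := ℂ) μ
    exact h2
  rw [NormedSpace.exp_eq_tsum ℂ]
  have := (ContinuousLinearMap.apply ℂ H v).map_tsum hsum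
  simp only [ContinuousLinearMap.apply_apply] at this
  rw [this]
  have : ∀ n : ℕ, (((Nat.factorial n : ℂ))⁻¹ • A ^ n) v = (((Nat.factorial n : ℂ))⁻¹ * μ ^ n) • v := by
    intro n
    rw [ContinuousLinearMap.smul_apply, hn, smul_smul]
  simp only [this]
  rw [hsum2.tsum_smul_const]
  congr 1
  rw [Complex.exp_eq_exp_ℂ, NormedSpace.exp_eq_tsum ℂ]
  simp [smul_eq_mul]

lemma proj_single {n : ℕ} (i j : Fin n) :
    proj (EuclideanSpace.single i (1:ℂ)) (EuclideanSpace.single j (1:ℂ)) =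
      if j = i then EuclideanSpace.single i (1:ℂ) else 0 := by
  simp only [proj, ContinuousLinearMap.smulRight_apply, innerSL_apply_apply,
    EuclideanSpace.inner_single_left, EuclideanSpace.single_apply, map_one, one_mul]
  split_ifs <;> simp_all


/-- The circuit "oracle, then phase gate `U_t = e^{−it}|0⟩⟨0| + |1⟩⟨1|` on the
ancilla, then oracle again", applied to `|x⟩ ⊗ |0⟩`, simulates the Hamiltonian
evolution `exp(−itH_f)` on the first register and returns the ancilla to `|0⟩`:
`O_f (I ⊗ U_t) O_f (|x⟩ ⊗ |0⟩) = (exp(−itH_f)|x⟩) ⊗ |0⟩`, where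
`H_f = I − |m⟩⟨m|`, `f` is the indicator of `m`, and
`O_f(|x⟩ ⊗ |y⟩) = |x⟩ ⊗ |y ⊕ f(x)⟩`. -/
theorem oracle_circuit_simulates_oracleHamiltonian (N : ℕ) (hN : 2 ≤ N) (m : Fin N)
    (f : Fin N → Fin 2) (hf : ∀ x, f x = if x = m then 1 else 0)
    (Of : EuclideanSpace ℂ (Fin N) ⊗[ℂ] EuclideanSpace ℂ (Fin 2) →ₗ[ℂ]
          EuclideanSpace ℂ (Fin N) ⊗[ℂ] EuclideanSpace ℂ (Fin 2))
    (hOf : ∀ (x : Fin N) (y : Fin 2),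
      Of (EuclideanSpace.single x (1 : ℂ) ⊗ₜ[ℂ] EuclideanSpace.single y (1 : ℂ)) =
        EuclideanSpace.single x (1 : ℂ) ⊗ₜ[ℂ] EuclideanSpace.single (y + f x) (1 : ℂ))
    (t : ℝ)
    (Ut : EuclideanSpace ℂ (Fin 2) →ₗ[ℂ] EuclideanSpace ℂ (Fin 2))
    (hUt : Ut = Complex.exp (-(Complex.I * (t : ℂ))) •
        (proj (EuclideanSpace.single (0 : Fin 2) 1)).toLinearMap +
      (proj (EuclideanSpace.single (1 : Fin 2) 1)).toLinearMap)
    (x : Fin N) :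
    (Of ∘ₗ (LinearMap.lTensor (EuclideanSpace ℂ (Fin N)) Ut) ∘ₗ Of)
      (EuclideanSpace.single x (1 : ℂ) ⊗ₜ[ℂ] EuclideanSpace.single (0 : Fin 2) (1 : ℂ)) =
    ((NormedSpace.exp
      ((-(Complex.I * (t : ℂ))) •
        ((1 : EuclideanSpace ℂ (Fin N) →L[ℂ] EuclideanSpace ℂ (Fin N)) -
          proj (EuclideanSpace.single m 1))) :
      EuclideanSpace ℂ (Fin N) →L[ℂ] EuclideanSpace ℂ (Fin N))
      (EuclideanSpace.single x (1 : ℂ)))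
    ⊗ₜ[ℂ] EuclideanSpace.single (0 : Fin 2) (1 : ℂ) := by
  set c : ℂ := -(Complex.I * (t : ℂ)) with hc
  set A : EuclideanSpace ℂ (Fin N) →L[ℂ] EuclideanSpace ℂ (Fin N) :=
    c • ((1 : EuclideanSpace ℂ (Fin N) →L[ℂ] EuclideanSpace ℂ (Fin N)) -
      proj (EuclideanSpace.single m 1)) with hA
  have hUt0 : Ut (EuclideanSpace.single (0 : Fin 2) 1) =
      Complex.exp c • EuclideanSpace.single (0 : Fin 2) 1 := by
    rw [hUt]
    simp [proj_single]
  have hUt1 : Ut (EuclideanSpace.single (1 : Fin 2) 1) =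
      EuclideanSpace.single (1 : Fin 2) 1 := by
    rw [hUt]
    simp [proj_single]
  by_cases hx : x = m
  · subst hx
    have hfx : f x = 1 := by rw [hf]; simp
    have heig : A (EuclideanSpace.single x 1) = (0 : ℂ) • EuclideanSpace.single x 1 := by
      rw [hA]
      simp [proj_single]
    rw [exp_eigen A _ 0 heig]
    simp only [LinearMap.comp_apply, hOf x 0, hfx, zero_add, LinearMap.lTensor_tmul, hUt1,
      hOf x 1]
    have h11 : (1 + (1 : Fin 2)) = 0 := rfl
    rw [h11, Complex.exp_zero, one_smul]
  · have hfx : f x = 0 := by rw [hf]; simp [hx]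
    have heig : A (EuclideanSpace.single x 1) = c • EuclideanSpace.single x 1 := by
      rw [hA]
      simp [proj_single, hx]
    rw [exp_eigen A _ c heig]
    simp only [LinearMap.comp_apply, hOf x 0, hfx, add_zero, LinearMap.lTensor_tmul,
      hUt0, TensorProduct.tmul_smul, map_smul, hOf x 0]
    rw [TensorProduct.smul_tmul']
end

section
/- For every t ∈ ℝ, exp(−i·(H_0 + H_f)·t)|s⟩ = e^{−it}·(cos(t/√N)·|s⟩ + i·sin(t/√N)·|m⟩). (This is an exact identity, valid for all N ≥ 2 and all t.) -/
/-- The uniform superposition `|s⟩ = (1/√N) ∑_x |x⟩`. -/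
noncomputable def uniformState (N : ℕ) : EuclideanSpace ℂ (Fin N) :=
  ((1 / Real.sqrt N : ℝ) : ℂ) • ∑ x : Fin N, EuclideanSpace.single x (1 : ℂ)

lemma exp_apply_eigen {H : Type*} [NormedAddCommGroup H] [NormedSpace ℂ H]
    [CompleteSpace H] (T : H →L[ℂ] H) (c : ℂ) (x : H) (h : T x = c • x) :
    NormedSpace.exp T x = Complex.exp c • x := by
  have hpow : ∀ n : ℕ, (T ^ n) x = c ^ n • x := by
    intro n
    induction n with
    | zero => simp
    | succ n ih =>
      rw [pow_succ, ContinuousLinearMap.mul_apply, h, map_smul, ih, smul_smul, ← pow_succ']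
  have hsum : Summable fun n : ℕ => ((n.factorial : ℂ))⁻¹ • T ^ n :=
    NormedSpace.expSeries_summable' (𝕂 := ℂ) T
  have hsumc : Summable fun n : ℕ => ((n.factorial : ℂ))⁻¹ * c ^ n := by
    simpa [smul_eq_mul] using NormedSpace.expSeries_summable' (𝕂 := ℂ) c
  have hmap := (ContinuousLinearMap.apply ℂ H x).map_tsum hsum
  rw [NormedSpace.exp_eq_tsum ℂ]
  calc (∑' n : ℕ, ((n.factorial : ℂ))⁻¹ • T ^ n) x
      = ∑' n : ℕ, (((n.factorial : ℂ))⁻¹ • T ^ n) x := by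
        simpa using hmap
    _ = ∑' n : ℕ, (((n.factorial : ℂ))⁻¹ * c ^ n) • x := by
        congr 1; funext n
        rw [ContinuousLinearMap.smul_apply, hpow, smul_smul]
    _ = (∑' n : ℕ, ((n.factorial : ℂ))⁻¹ * c ^ n) • x := hsumc.tsum_smul_const x
    _ = Complex.exp c • x := by
        congr 1
        rw [Complex.exp_eq_exp_ℂ, NormedSpace.exp_eq_tsum ℂ]
        simp [smul_eq_mul]

/-- The analog quantum search of Farhi–Gutmann: the evolution under the
time-independent Hamiltonian `H⁰ + H_f` (with `H⁰ = I − |s⟩⟨s|` and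
`H_f = I − |m⟩⟨m|`) starting from the uniform superposition `|s⟩` is an exact
rotation, `exp(−i(H⁰+H_f)t)|s⟩ = e^{−it}(cos(t/√N)|s⟩ + i sin(t/√N)|m⟩)`. -/
theorem exp_analogSearch_apply_uniformState (N : ℕ) (hN : 2 ≤ N) (m : Fin N) (t : ℝ) :
    (NormedSpace.exp
      ((-(Complex.I * (t : ℂ))) •
        (((1 : EuclideanSpace ℂ (Fin N) →L[ℂ] EuclideanSpace ℂ (Fin N)) -
            proj (uniformState N)) +
          ((1 : EuclideanSpace ℂ (Fin N) →L[ℂ] EuclideanSpace ℂ (Fin N)) -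
            proj (EuclideanSpace.single m 1)))) :
      EuclideanSpace ℂ (Fin N) →L[ℂ] EuclideanSpace ℂ (Fin N))
      (uniformState N) =
    Complex.exp (-(Complex.I * (t : ℂ))) •
      (((Real.cos (t / Real.sqrt N) : ℝ) : ℂ) • uniformState N +
        (Complex.I * ((Real.sin (t / Real.sqrt N) : ℝ) : ℂ)) •
          EuclideanSpace.single m (1 : ℂ)) := by
  classical
  have hNpos : (0 : ℝ) < N := by
    have : 0 < N := lt_of_lt_of_le (by norm_num) hN
    exact_mod_cast this
  have hsqrt_pos : 0 < Real.sqrt N := Real.sqrt_pos.mpr hNpos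
  have hNC : (N : ℂ) ≠ 0 := by
    have h0 : N ≠ 0 := by omega
    exact_mod_cast h0
  set s : EuclideanSpace ℂ (Fin N) := uniformState N with hs
  set em : EuclideanSpace ℂ (Fin N) := EuclideanSpace.single m (1 : ℂ) with hem
  set c : ℝ := 1 / Real.sqrt N with hc
  set a : ℂ := (c : ℂ) with ha
  have hs_apply : ∀ j, s j = a := by
    intro j
    have hsum1 : (∑ x : Fin N, EuclideanSpace.single x (1 : ℂ)) j = 1 := by
      rw [WithLp.ofLp_sum, Finset.sum_apply]
      simp [EuclideanSpace.single_apply]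
    show ((1 / Real.sqrt N : ℝ) : ℂ) • (∑ x : Fin N, EuclideanSpace.single x (1 : ℂ)) j = a
    rw [hsum1, ha, hc, smul_eq_mul, mul_one]
  have hcc : c * c = 1 / N := by
    rw [hc, div_mul_div_comm, one_mul, Real.mul_self_sqrt hNpos.le]
  have h_ss : (inner ℂ s s : ℂ) = 1 := by
    rw [PiLp.inner_apply]
    simp only [RCLike.inner_apply, hs_apply, ha, Complex.conj_ofReal, Finset.sum_const,
      Finset.card_univ, Fintype.card_fin, nsmul_eq_mul]
    rw [← Complex.ofReal_mul, hcc]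
    push_cast
    rw [mul_one_div]
    exact div_self hNC
  have h_sm : (inner ℂ s em : ℂ) = a := by
    rw [hem, EuclideanSpace.inner_single_right, hs_apply, ha, Complex.conj_ofReal, one_mul]
  have h_ms : (inner ℂ em s : ℂ) = a := by
    rw [hem, EuclideanSpace.inner_single_left, hs_apply, map_one, one_mul]
  have h_mm : (inner ℂ em em : ℂ) = 1 := by
    rw [hem, EuclideanSpace.inner_single_left, map_one, one_mul,
      EuclideanSpace.single_apply, if_pos rfl]
  have hproj : ∀ ψ v : EuclideanSpace ℂ (Fin N), proj ψ v = (inner ℂ ψ v : ℂ) • ψ :=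
    fun ψ v => rfl
  set A := ((-(Complex.I * (t : ℂ))) •
        (((1 : EuclideanSpace ℂ (Fin N) →L[ℂ] EuclideanSpace ℂ (Fin N)) - proj s) +
          ((1 : EuclideanSpace ℂ (Fin N) →L[ℂ] EuclideanSpace ℂ (Fin N)) - proj em)))
    with hA
  have hu : A (s + em) = (-(Complex.I * (t : ℂ)) * (1 - a)) • (s + em) := by
    simp only [hA, ContinuousLinearMap.smul_apply, ContinuousLinearMap.add_apply,
      ContinuousLinearMap.sub_apply, ContinuousLinearMap.one_apply, hproj,
      inner_add_right, h_ss, h_sm, h_ms, h_mm]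
    module
  have hv : A (s - em) = (-(Complex.I * (t : ℂ)) * (1 + a)) • (s - em) := by
    simp only [hA, ContinuousLinearMap.smul_apply, ContinuousLinearMap.add_apply,
      ContinuousLinearMap.sub_apply, ContinuousLinearMap.one_apply, hproj,
      inner_sub_right, h_ss, h_sm, h_ms, h_mm]
    module
  have h1 := exp_apply_eigen A _ _ hu
  have h2 := exp_apply_eigen A _ _ hv
  have hdecomp : s = (1 / 2 : ℂ) • (s + em) + (1 / 2 : ℂ) • (s - em) := by module
  have hz : (t : ℂ) * a = ((t / Real.sqrt N : ℝ) : ℂ) := by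
    rw [ha, hc]
    push_cast
    ring
  set z : ℂ := ((t / Real.sqrt N : ℝ) : ℂ) with hz'
  have hmu1 : -(Complex.I * (t : ℂ)) * (1 - a) = -(Complex.I * (t : ℂ)) + z * Complex.I := by
    rw [← hz]; ring
  have hmu2 : -(Complex.I * (t : ℂ)) * (1 + a) = -(Complex.I * (t : ℂ)) + (-z) * Complex.I := by
    rw [← hz]; ring
  have hexp1 : Complex.exp (-(Complex.I * (t : ℂ)) * (1 - a)) =
      Complex.exp (-(Complex.I * (t : ℂ))) * (Complex.cos z + Complex.sin z * Complex.I) := by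
    rw [hmu1, Complex.exp_add, Complex.exp_mul_I]
  have hexp2 : Complex.exp (-(Complex.I * (t : ℂ)) * (1 + a)) =
      Complex.exp (-(Complex.I * (t : ℂ))) * (Complex.cos z - Complex.sin z * Complex.I) := by
    rw [hmu2, Complex.exp_add, Complex.exp_mul_I, Complex.cos_neg, Complex.sin_neg]
    ring
  conv_lhs => rw [hdecomp]
  rw [map_add, map_smul, map_smul, h1, h2, hexp1, hexp2, Complex.ofReal_cos,
    Complex.ofReal_sin, ← hz']
  match_scalars <;> ring
end

section
/- The operator norm of the commutator of H_0 and H_f satisfies ‖[H_0, H_f]‖ = ‖H_0 H_f − H_f H_0‖ = √(1/N)·√(1 − 1/N). -/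
open scoped ComplexInnerProductSpace

lemma proj_apply {H : Type*} [NormedAddCommGroup H] [InnerProductSpace ℂ H]
    (ψ v : H) : proj ψ v = ⟪ψ, v⟫ • ψ := rfl

lemma uniformState_apply (N : ℕ) (x : Fin N) :
    uniformState N x = ((1 / Real.sqrt N : ℝ) : ℂ) := by
  have h : (∑ y : Fin N, EuclideanSpace.single y (1:ℂ)) x
      = ∑ y : Fin N, EuclideanSpace.single y (1:ℂ) x := by
    rw [WithLp.ofLp_sum]; exact Finset.sum_apply _ _ _
  simp [uniformState, h, EuclideanSpace.single_apply]

/-- The operator norm of the commutator of `H⁰ = I − |s⟩⟨s|` and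
`H_f = I − |m⟩⟨m|` equals `√(1/N) · √(1 − 1/N)`. -/
theorem norm_commutator_searchHamiltonians (N : ℕ) (hN : 2 ≤ N) (m : Fin N)
    (H0 Hf : EuclideanSpace ℂ (Fin N) →L[ℂ] EuclideanSpace ℂ (Fin N))
    (hH0 : H0 = 1 - proj (uniformState N))
    (hHf : Hf = 1 - proj (EuclideanSpace.single m 1)) :
    ‖H0 * Hf - Hf * H0‖ = Real.sqrt (1 / N) * Real.sqrt (1 - 1 / N) := by
  have hN2 : (2:ℝ) ≤ N := by exact_mod_cast hN
  have hNpos : (0:ℝ) < N := by linarith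
  set a : ℝ := Real.sqrt (1/N) with ha
  set b : ℝ := Real.sqrt (1 - 1/N) with hb
  have h1N : (1:ℝ)/N < 1 := by rw [div_lt_one hNpos]; linarith
  have ha2 : a^2 = 1/N := Real.sq_sqrt (by positivity)
  have hb2 : b^2 = 1 - 1/N := Real.sq_sqrt (by linarith)
  have hapos : 0 < a := Real.sqrt_pos.2 (by positivity)
  have hbpos : 0 < b := Real.sqrt_pos.2 (by linarith)
  set e : EuclideanSpace ℂ (Fin N) := EuclideanSpace.single m (1:ℂ) with he
  set s : EuclideanSpace ℂ (Fin N) := uniformState N with hs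
  have haC : (a:ℂ) = ((1 / Real.sqrt N : ℝ) : ℂ) := by
    norm_cast
    rw [ha, one_div, one_div, Real.sqrt_inv]
  have hes : ⟪e, s⟫ = (a:ℂ) := by
    rw [he, hs, EuclideanSpace.inner_single_left, uniformState_apply, map_one, one_mul, haC]
  have hee : ⟪e, e⟫ = 1 := by
    rw [he, EuclideanSpace.inner_single_left, map_one, one_mul, EuclideanSpace.single_apply]
    simp
  have hse : ⟪s, e⟫ = (a:ℂ) := by
    rw [← inner_conj_symm, hes, Complex.conj_ofReal]
  have hss : ⟪s, s⟫ = 1 := by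
    have hNC : (N:ℂ) ≠ 0 := by exact_mod_cast hNpos.ne'
    rw [hs, PiLp.inner_apply]
    simp only [uniformState_apply, RCLike.inner_apply, Complex.conj_ofReal,
      Finset.sum_const, Finset.card_univ, Fintype.card_fin, nsmul_eq_mul]
    rw [← Complex.ofReal_mul, div_mul_div_comm, one_mul, Real.mul_self_sqrt hNpos.le]
    push_cast
    field_simp
  have hne : ‖e‖ = 1 := by rw [he]; simp [EuclideanSpace.norm_single]
  have hbC : ((b:ℂ)) ≠ 0 := by exact_mod_cast hbpos.ne'
  have hab2 : (a:ℂ)^2 + (b:ℂ)^2 = 1 := by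
    have h : a^2 + b^2 = 1 := by rw [ha2, hb2]; ring
    exact_mod_cast h
  set u : EuclideanSpace ℂ (Fin N) := ((b:ℂ))⁻¹ • (s - (a:ℂ) • e) with hu
  have heu : ⟪e, u⟫ = 0 := by
    rw [hu, inner_smul_right, inner_sub_right, inner_smul_right, hes, hee]
    ring
  have hue : ⟪u, e⟫ = 0 := by rw [← inner_conj_symm, heu, map_zero]
  have huu : ⟪u, u⟫ = 1 := by
    simp only [hu, inner_smul_left, inner_smul_right, inner_sub_left, inner_sub_right,
      hss, hes, hse, hee, map_inv₀, Complex.conj_ofReal]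
    field_simp
    linear_combination -hab2
  have hnu : ‖u‖ = 1 := by
    rw [norm_eq_sqrt_re_inner (𝕜 := ℂ) u, huu]
    simp
  have hsdec : s = (a:ℂ) • e + (b:ℂ) • u := by
    rw [hu, smul_inv_smul₀ hbC]
    module
  have hcomm : H0 * Hf - Hf * H0 = proj s * proj e - proj e * proj s := by
    rw [hH0, hHf, sub_mul, sub_mul, one_mul, one_mul, mul_sub, mul_sub, mul_one, mul_one]
    abel
  have hCv : ∀ v, (H0 * Hf - Hf * H0) v
      = ((a*b : ℝ):ℂ) • (⟪e, v⟫ • u - ⟪u, v⟫ • e) := by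
    intro v
    rw [hcomm]
    simp only [ContinuousLinearMap.sub_apply, ContinuousLinearMap.mul_apply, proj_apply,
      inner_smul_right, hse, hes]
    have hsv : ⟪s, v⟫ = (a:ℂ) * ⟪e, v⟫ + (b:ℂ) * ⟪u, v⟫ := by
      rw [hsdec, inner_add_left, inner_smul_left, inner_smul_left,
        Complex.conj_ofReal, Complex.conj_ofReal]
    rw [hsv, hsdec]
    push_cast
    module
  have hnormCv : ∀ v, ‖(H0 * Hf - Hf * H0) v‖^2
      = (a*b)^2 * (‖⟪e, v⟫‖^2 + ‖⟪u, v⟫‖^2) := by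
    intro v
    have hba : ‖((a*b:ℝ):ℂ)‖ = a*b := by
      rw [Complex.norm_real, Real.norm_eq_abs, abs_of_pos (mul_pos hapos hbpos)]
    have h0 : ⟪(⟪e,v⟫ : ℂ) • u, (⟪u,v⟫ : ℂ) • e⟫ = 0 := by
      rw [inner_smul_left, inner_smul_right, hue]; ring
    rw [hCv v, norm_smul, hba, mul_pow, norm_sub_sq (𝕜 := ℂ), h0]
    simp only [map_zero, mul_zero, sub_zero, norm_smul, hnu, hne, mul_one]
  have hON : Orthonormal ℂ (fun i : Bool => if i then u else e) := by
    rw [orthonormal_iff_ite]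
    intro i j
    cases i <;> cases j <;> simp [hee, heu, hue, huu, hne, hnu]
  have hBessel : ∀ v : EuclideanSpace ℂ (Fin N),
      ‖⟪e, v⟫‖^2 + ‖⟪u, v⟫‖^2 ≤ ‖v‖^2 := by
    intro v
    have h := hON.sum_inner_products_le (s := Finset.univ) v
    simp only [Fintype.sum_bool, reduceIte, Bool.false_eq_true, if_false] at h
    linarith
  have hub : ‖H0 * Hf - Hf * H0‖ ≤ a * b := by
    refine ContinuousLinearMap.opNorm_le_bound _ (by positivity) fun v => ?_
    have h1 := hnormCv v
    have h2 := hBessel v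
    have h3 : ‖(H0 * Hf - Hf * H0) v‖^2 ≤ (a*b*‖v‖)^2 := by
      rw [h1]
      have : (a*b)^2 * (‖⟪e, v⟫‖^2 + ‖⟪u, v⟫‖^2) ≤ (a*b)^2 * ‖v‖^2 := by
        apply mul_le_mul_of_nonneg_left h2 (by positivity)
      calc (a*b)^2 * (‖⟪e, v⟫‖^2 + ‖⟪u, v⟫‖^2) ≤ (a*b)^2 * ‖v‖^2 := this
        _ = (a*b*‖v‖)^2 := by ring
    exact (pow_le_pow_iff_left₀ (norm_nonneg _) (by positivity) two_ne_zero).1 h3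
  have hlb : a * b ≤ ‖H0 * Hf - Hf * H0‖ := by
    have hCe : (H0 * Hf - Hf * H0) e = ((a*b:ℝ):ℂ) • u := by
      rw [hCv e, hee, hue]
      module
    have hnCe : ‖(H0 * Hf - Hf * H0) e‖ = a*b := by
      rw [hCe, norm_smul, hnu, mul_one, Complex.norm_real, Real.norm_eq_abs,
        abs_of_pos (mul_pos hapos hbpos)]
    calc a*b = ‖(H0 * Hf - Hf * H0) e‖ := hnCe.symm
      _ ≤ ‖H0 * Hf - Hf * H0‖ :=
        (H0 * Hf - Hf * H0).unit_le_opNorm e (le_of_eq hne)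
  exact le_antisymm hub hlb
end

section
/- For every s ∈ [0,1], the vector |E₀;s⟩ = [√N·(E₁(s) − s)·|s⟩ + s·|m⟩] / √(E₁(s)² + (N−1)·(E₁(s) − s)²) is a unit vector and is an eigenvector of H(s) with eigenvalue E₀(s), i.e. H(s)|E₀;s⟩ = E₀(s)·|E₀;s⟩ and ‖|E₀;s⟩‖ = 1. -/
set_option maxHeartbeats 2000000

open scoped ComplexConjugate


/-- Ground-state energy of the interpolating search Hamiltonian. -/
noncomputable def E₀ (N : ℕ) (s : ℝ) : ℝ :=
  (1 - Real.sqrt (1 - 4 * ((N - 1 : ℝ) / N) * s * (1 - s))) / 2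

/-- Excited-state energy of the interpolating search Hamiltonian. -/
noncomputable def E₁ (N : ℕ) (s : ℝ) : ℝ :=
  (1 + Real.sqrt (1 - 4 * ((N - 1 : ℝ) / N) * s * (1 - s))) / 2

/-- For the interpolating Hamiltonian `H(s) = (1−s)(I−|s⟩⟨s|) + s(I−|m⟩⟨m|)` of
the adiabatic quantum search, for every `s ∈ [0,1]` the vector
`|E₀;s⟩ = [√N(E₁(s)−s)|s⟩ + s|m⟩] / √(E₁(s)² + (N−1)(E₁(s)−s)²)` is a unit
eigenvector of `H(s)` with eigenvalue `E₀(s)`. -/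
theorem groundState_interpolatingHamiltonian (N : ℕ) (hN : 2 ≤ N) (m : Fin N)
    (s : ℝ) (hs : s ∈ Set.Icc (0:ℝ) 1)
    (Hs : EuclideanSpace ℂ (Fin N) →L[ℂ] EuclideanSpace ℂ (Fin N))
    (hHs : Hs = ((1 - s : ℝ) : ℂ) • (1 - proj (uniformState N)) +
      ((s : ℝ) : ℂ) • (1 - proj (EuclideanSpace.single m 1)))
    (v : EuclideanSpace ℂ (Fin N))
    (hv : v = ((1 / Real.sqrt ((E₁ N s)^2 + (N - 1 : ℝ) * (E₁ N s - s)^2) : ℝ) : ℂ) •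
      (((Real.sqrt N * (E₁ N s - s) : ℝ) : ℂ) • uniformState N +
        ((s : ℝ) : ℂ) • EuclideanSpace.single m (1 : ℂ))) :
    Hs v = ((E₀ N s : ℝ) : ℂ) • v ∧ ‖v‖ = 1 := by
  obtain ⟨hs0, hs1⟩ := hs
  have hN0 : (0:ℝ) < N := by positivity
  have hN1 : (1:ℝ) ≤ (N:ℝ) := by exact_mod_cast Nat.one_le_of_lt hN
  have hq : Real.sqrt N > 0 := Real.sqrt_pos.mpr hN0
  have hq2 : Real.sqrt N * Real.sqrt N = (N:ℝ) := Real.mul_self_sqrt hN0.le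
  set u := uniformState N with hu
  set e := EuclideanSpace.single m (1:ℂ) with he
  have hk : 0 ≤ 1 - 4 * ((N - 1 : ℝ) / N) * s * (1 - s) := by
    have h1 : ((N:ℝ) - 1) / N ≤ 1 := by rw [div_le_one hN0]; linarith
    have h2 : 0 ≤ ((N:ℝ) - 1) / N := div_nonneg (by linarith) hN0.le
    nlinarith [sq_nonneg (2*s - 1), mul_nonneg h2 (mul_nonneg hs0 (by linarith : (0:ℝ) ≤ 1 - s))]
  set r := Real.sqrt (1 - 4 * ((N - 1 : ℝ) / N) * s * (1 - s)) with hrdef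
  have hr : r ^ 2 = 1 - 4 * ((N - 1 : ℝ) / N) * s * (1 - s) := Real.sq_sqrt hk
  have hr0 : 0 ≤ r := Real.sqrt_nonneg _
  set E := E₁ N s with hE
  have hEdef : E = (1 + r) / 2 := rfl
  have hrN : (N:ℝ) * r ^ 2 = N - 4 * (N - 1) * s * (1 - s) := by
    rw [hr]; field_simp
  have hEsq : (N:ℝ) * E^2 = N * E - (N - 1) * s * (1 - s) := by
    rw [hEdef]; linear_combination (1/4 : ℝ) * hrN
  have hE0 : E₀ N s = 1 - E := by
    rw [hEdef]; unfold E₀; rw [← hrdef]; ring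
  have hEhalf : (1:ℝ)/2 ≤ E := by rw [hEdef]; linarith
  set D := E^2 + ((N:ℝ) - 1) * (E - s)^2 with hD
  have hDpos : 0 < D := by
    have h3 : 0 ≤ ((N:ℝ) - 1) * (E - s)^2 := mul_nonneg (by linarith) (sq_nonneg _)
    nlinarith
  have hsD : Real.sqrt D * Real.sqrt D = D := Real.mul_self_sqrt hDpos.le
  have hsDpos : 0 < Real.sqrt D := Real.sqrt_pos.mpr hDpos
  have hsum : ∀ j : Fin N, (∑ x : Fin N, EuclideanSpace.single x (1:ℂ)) j = 1 := by
    intro j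
    rw [WithLp.ofLp_sum, Finset.sum_apply]
    simp [EuclideanSpace.single_apply]
  have hu_apply : ∀ x, u x = ((1/Real.sqrt N : ℝ) : ℂ) := by
    intro x
    rw [hu, uniformState]
    show ((1 / Real.sqrt N : ℝ) : ℂ) * (∑ x : Fin N, EuclideanSpace.single x (1:ℂ)) x = _
    rw [hsum]; ring
  have huu : @inner ℂ _ _ u u = 1 := by
    have h : @inner ℂ _ _ u u = ∑ x : Fin N, conj (u x) * u x := by
      rw [PiLp.inner_apply]; exact Finset.sum_congr rfl fun x _ => by rw [RCLike.inner_apply]; ring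
    rw [h]
    simp only [hu_apply, Complex.conj_ofReal]
    rw [Finset.sum_const, Finset.card_univ, Fintype.card_fin, nsmul_eq_mul,
      ← Complex.ofReal_mul, div_mul_div_comm, one_mul, hq2]
    rw [Complex.ofReal_div]
    push_cast
    have hNne : N ≠ 0 := by omega
    have : (N:ℂ) ≠ 0 := Nat.cast_ne_zero.mpr hNne
    field_simp
  have heu : @inner ℂ _ _ e u = ((1/Real.sqrt N : ℝ) : ℂ) := by
    rw [he, EuclideanSpace.inner_single_left, hu_apply]; simp
  have hue : @inner ℂ _ _ u e = ((1/Real.sqrt N : ℝ) : ℂ) := by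
    rw [he, EuclideanSpace.inner_single_right, hu_apply]
    simp [Complex.conj_ofReal]
  have hee : @inner ℂ _ _ e e = 1 := by
    rw [he, EuclideanSpace.inner_single_left]; simp
  have hproj : ∀ (ψ w : EuclideanSpace ℂ (Fin N)), proj ψ w = (@inner ℂ _ _ ψ w) • ψ := by
    intro ψ w; rfl
  have hq2C : (Real.sqrt N : ℂ) * (Real.sqrt N : ℂ) = (N:ℂ) := by exact_mod_cast hq2
  have hNq : (N:ℂ) = (Real.sqrt N : ℂ) * (Real.sqrt N : ℂ) := hq2C.symm
  have hEsqC : (N:ℂ) * (E:ℂ)^2 = (N:ℂ) * (E:ℂ) - ((N:ℂ) - 1) * (s:ℂ) * (1 - (s:ℂ)) := by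
    exact_mod_cast hEsq
  rw [hNq] at hEsqC
  have hqne : (Real.sqrt N : ℂ) ≠ 0 := by exact_mod_cast ne_of_gt hq
  set w : EuclideanSpace ℂ (Fin N) :=
    ((Real.sqrt N * (E - s) : ℝ) : ℂ) • u + ((s : ℝ) : ℂ) • e with hwdef
  set c : ℝ := 1 / Real.sqrt D with hc
  have hv' : v = ((c:ℝ):ℂ) • w := hv
  have hw : Hs w = ((1 - E : ℝ) : ℂ) • w := by
    rw [hHs, hwdef]
    simp only [ContinuousLinearMap.add_apply, ContinuousLinearMap.smul_apply,
      ContinuousLinearMap.sub_apply, ContinuousLinearMap.one_apply, hproj,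
      inner_add_right, inner_smul_right, huu, heu, hue, hee]
    match_scalars
    · push_cast
      field_simp
      first
      | ring1
      | linear_combination hEsqC
    · push_cast
      field_simp
      first
      | ring1
      | linear_combination hEsqC
  have hww : @inner ℂ _ _ w w = ((D:ℝ):ℂ) := by
    rw [hwdef]
    simp only [inner_add_left, inner_add_right, inner_smul_left, inner_smul_right,
      huu, heu, hue, hee, Complex.conj_ofReal]
    rw [hD]
    push_cast
    rw [hNq]
    field_simp
    ring
  constructor
  · rw [hv', map_smul, hw, hE0, smul_comm]
  · have hvv : @inner ℂ _ _ v v = 1 := by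
      rw [hv', inner_smul_left, inner_smul_right, hww, Complex.conj_ofReal]
      rw [← Complex.ofReal_mul, ← Complex.ofReal_mul, Complex.ofReal_eq_one]
      rw [hc]
      field_simp
      rw [Real.sq_sqrt hDpos.le]
    have h3 := inner_self_eq_norm_sq (𝕜 := ℂ) v
    rw [hvv] at h3
    have h2 : ‖v‖^2 = 1 := by simpa using h3.symm
    nlinarith [norm_nonneg v]
end

section
/- Fix ε > 0 and define t : [0,1] → ℝ by t(s) = (N / (2ε√(N−1)))·[arctan(√(N−1)·(2s−1)) + arctan(√(N−1))]. Then t(0) = 0, t is strictly increasing, and for every s ∈ [0,1], t has derivative 1/(ε·g(s)²) at s, where g(s) = √(1 − 4((N−1)/N)·s·(1−s)). (This is the local adiabatic schedule: the evolution rate ds/dt = ε·g(s)² at every instant.) -/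
/-- The local adiabatic schedule
`t(s) = (N/(2ε√(N−1)))[arctan(√(N−1)(2s−1)) + arctan(√(N−1))]`
satisfies `t(0) = 0`, is strictly increasing on `[0,1]`, and has derivative
`t'(s) = 1/(ε·g(s)²)` at every `s ∈ [0,1]`, where
`g(s) = √(1 − 4((N−1)/N)s(1−s))` is the spectral gap;
i.e. the evolution rate is `ds/dt = ε·g(s)²` at every instant. -/
theorem localAdiabaticSchedule_deriv (N : ℕ) (hN : 2 ≤ N) (ε : ℝ) (hε : 0 < ε)
    (g : ℝ → ℝ)
    (hg : ∀ s, g s = Real.sqrt (1 - 4 * ((N - 1 : ℝ) / N) * s * (1 - s)))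
    (t : ℝ → ℝ)
    (ht : ∀ s, t s = (N / (2 * ε * Real.sqrt (N - 1))) *
      (Real.arctan (Real.sqrt (N - 1) * (2 * s - 1)) + Real.arctan (Real.sqrt (N - 1)))) :
    t 0 = 0 ∧ StrictMonoOn t (Set.Icc (0:ℝ) 1) ∧
      ∀ s ∈ Set.Icc (0:ℝ) 1, HasDerivAt t (1 / (ε * (g s)^2)) s := by
  set a : ℝ := Real.sqrt (N - 1) with ha
  have hN1 : (1 : ℝ) ≤ (N : ℝ) - 1 := by
    have : (2 : ℝ) ≤ (N : ℝ) := by exact_mod_cast hN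
    linarith
  have hNpos : (0 : ℝ) < (N : ℝ) := by linarith
  have ha2 : a ^ 2 = (N : ℝ) - 1 := Real.sq_sqrt (by linarith)
  have hapos : 0 < a := Real.sqrt_pos.mpr (by linarith)
  have hteq : t = fun s => ((N : ℝ) / (2 * ε * a)) *
      (Real.arctan (a * (2 * s - 1)) + Real.arctan a) := funext ht
  -- derivative of t at every real s
  have hderiv : ∀ s : ℝ, HasDerivAt t
      ((N : ℝ) / (ε * (1 + ((N : ℝ) - 1) * (2 * s - 1) ^ 2))) s := by
    intro s
    have h1 : HasDerivAt (fun s : ℝ => a * (2 * s - 1)) (a * 2) s := by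
      simpa using (((hasDerivAt_id s).const_mul (2:ℝ)).sub_const 1).const_mul a
    have h2 := (Real.hasDerivAt_arctan (a * (2 * s - 1))).comp s h1
    have h3 := ((h2.add_const (Real.arctan a)).const_mul ((N : ℝ) / (2 * ε * a)))
    rw [hteq]
    convert h3 using 1
    case e'_4 => rfl
    case e'_5 => rfl
    case e'_8 => rfl
    have hden : 0 < 1 + ((N : ℝ) - 1) * (2 * s - 1) ^ 2 := by positivity
    have hden2 : 1 + (a * (2 * s - 1)) ^ 2 = 1 + ((N : ℝ) - 1) * (2 * s - 1) ^ 2 := by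
      rw [mul_pow, ha2]
    rw [hden2]
    field_simp
  have hpos : ∀ s : ℝ, 0 < (N : ℝ) / (ε * (1 + ((N : ℝ) - 1) * (2 * s - 1) ^ 2)) := by
    intro s; positivity
  have hsm : StrictMono t := by
    apply strictMono_of_deriv_pos
    intro s
    rw [(hderiv s).deriv]
    exact hpos s
  refine ⟨?_, hsm.strictMonoOn _, ?_⟩
  · rw [ht 0]
    have : a * (2 * 0 - 1) = -a := by ring
    rw [this, Real.arctan_neg]
    ring
  · intro s hs
    have hderiv' := hderiv s
    have hq : 1 / (ε * (g s) ^ 2) =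
        (N : ℝ) / (ε * (1 + ((N : ℝ) - 1) * (2 * s - 1) ^ 2)) := by
      have hg2 : (g s) ^ 2 = 1 - 4 * (((N : ℝ) - 1) / N) * s * (1 - s) := by
        rw [hg s]
        refine Real.sq_sqrt ?_
        have h1 : s * (1 - s) ≤ 1 / 4 := by nlinarith [sq_nonneg (2*s-1)]
        have h2 : 4 * (((N : ℝ) - 1) / N) * s * (1 - s) ≤ ((N : ℝ) - 1) / N := by
          have hdivpos : 0 ≤ ((N : ℝ) - 1) / N := by positivity
          have hs01 : 0 ≤ s * (1 - s) := by nlinarith [hs.1, hs.2]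
          nlinarith
        have h3 : ((N : ℝ) - 1) / N < 1 := by
          rw [div_lt_one hNpos]; linarith
        linarith
      rw [hg2]
      rw [div_eq_div_iff]
      · field_simp
        try ring_nf
        try tauto
      · have : 4 * (((N : ℝ) - 1) / N) * s * (1 - s) =
            (4 * ((N : ℝ) - 1) * s * (1 - s)) / N := by ring
        rw [this]
        have hnum : 4 * ((N : ℝ) - 1) * s * (1 - s) < N := by nlinarith [sq_nonneg (2*s-1), hN1]
        have : 0 < 1 - (4 * ((N : ℝ) - 1) * s * (1 - s)) / N := by
          rw [sub_pos, div_lt_one hNpos]; exact hnum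
        positivity
      · positivity
    rw [hq]
    exact hderiv'
end

section
/- Fix ε > 0 and define t : [0,1] → ℝ by t(s) = (N / (2ε√(N−1)))·[arctan(√(N−1)·(2s−1)) + arctan(√(N−1))]. Then the total running time of the local adiabatic search satisfies T = t(1) = (N / (ε√(N−1)))·arctan(√(N−1)), and T ≤ (π/ε)·√N. -/
open scoped Real

/-- The total running time of the local adiabatic quantum search, i.e. the
value at `s = 1` of the schedule
`t(s) = (N/(2ε√(N−1)))[arctan(√(N−1)(2s−1)) + arctan(√(N−1))]`,
equals `T = (N/(ε√(N−1)))·arctan(√(N−1))`, and satisfies `T ≤ (π/ε)√N`. -/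
theorem localAdiabaticSchedule_total_time (N : ℕ) (hN : 2 ≤ N) (ε : ℝ) (hε : 0 < ε)
    (t : ℝ → ℝ)
    (ht : ∀ s, t s = (N / (2 * ε * Real.sqrt (N - 1))) *
      (Real.arctan (Real.sqrt (N - 1) * (2 * s - 1)) + Real.arctan (Real.sqrt (N - 1)))) :
    t 1 = (N / (ε * Real.sqrt (N - 1))) * Real.arctan (Real.sqrt (N - 1)) ∧
      t 1 ≤ (π / ε) * Real.sqrt N := by
  have hN1 : (1:ℝ) ≤ (N:ℝ) - 1 := by
    have : (2:ℝ) ≤ N := by exact_mod_cast hN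
    linarith
  have hs : (0:ℝ) < Real.sqrt (N - 1) := Real.sqrt_pos.mpr (by linarith)
  have heq : t 1 = (N / (ε * Real.sqrt (N - 1))) * Real.arctan (Real.sqrt (N - 1)) := by
    rw [ht 1]
    have : Real.sqrt (↑N - 1) * (2 * 1 - 1) = Real.sqrt (↑N - 1) := by ring
    rw [this]
    field_simp
    ring
  refine ⟨heq, ?_⟩
  rw [heq]
  have hNpos : (0:ℝ) < N := by positivity
  have harc : Real.arctan (Real.sqrt (N - 1)) ≤ π / 2 :=
    le_of_lt (Real.arctan_lt_pi_div_two _)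
  have harcpos : 0 ≤ Real.arctan (Real.sqrt (N - 1)) :=
    by rw [← Real.arctan_zero]; exact Real.arctan_strictMono.monotone hs.le
  have hcoef : 0 ≤ N / (ε * Real.sqrt (N - 1)) := by positivity
  calc (N / (ε * Real.sqrt (N - 1))) * Real.arctan (Real.sqrt (N - 1))
      ≤ (N / (ε * Real.sqrt (N - 1))) * (π / 2) := by
        exact mul_le_mul_of_nonneg_left harc hcoef
    _ ≤ (π / ε) * Real.sqrt N := by
        rw [div_mul_eq_mul_div, div_le_iff₀ (by positivity)]
        have key : (N:ℝ) ≤ 2 * Real.sqrt N * Real.sqrt (N - 1) := by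
          have h1 : Real.sqrt N ^ 2 = (N:ℝ) := Real.sq_sqrt hNpos.le
          have h2 : Real.sqrt (N-1) ^ 2 = (N:ℝ) - 1 := Real.sq_sqrt (by linarith)
          nlinarith [sq_nonneg (Real.sqrt N - 2 * Real.sqrt (N-1)),
            Real.sqrt_nonneg (N:ℝ), hs]
        have hπ : 0 < π := Real.pi_pos
        calc (N:ℝ) * (π / 2) ≤ (2 * Real.sqrt N * Real.sqrt (N-1)) * (π / 2) := by
              exact mul_le_mul_of_nonneg_right key (by positivity)
          _ = π / ε * Real.sqrt N * (ε * Real.sqrt (N - 1)) := by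
              field_simp
end

section
/- There exists a natural number R with R ≤ (π/4)·√N such that ‖G^R|s⟩ − |m⟩‖ ≤ 2/√N. In particular |⟨m | G^R |s⟩|² ≥ 1 − 2/N, so after at most (π/4)√N Grover iterations, measuring yields the marked element with probability tending to 1 as N → ∞. -/
set_option maxHeartbeats 1000000


open scoped Real InnerProductSpace

/-- Grover's algorithm succeeds: there is a number of iterations
`R ≤ (π/4)√N` such that `‖G^R|s⟩ − |m⟩‖ ≤ 2/√N`; in particular
`|⟨m|G^R|s⟩|² ≥ 1 − 2/N`, so measuring after `R` iterations yields the marked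
element with probability tending to `1` as `N → ∞`. -/
theorem grover_succeeds (N : ℕ) (hN : 2 ≤ N) (m : Fin N)
    (G : EuclideanSpace ℂ (Fin N) →L[ℂ] EuclideanSpace ℂ (Fin N))
    (hG : G = -((1 - (2 : ℂ) • proj (uniformState N)) *
      (1 - (2 : ℂ) • proj (EuclideanSpace.single m 1)))) :
    ∃ R : ℕ, (R : ℝ) ≤ (π / 4) * Real.sqrt N ∧
      ‖(G ^ R) (uniformState N) - EuclideanSpace.single m (1 : ℂ)‖ ≤ 2 / Real.sqrt N ∧
      1 - 2 / (N : ℝ) ≤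
        ‖⟪EuclideanSpace.single m (1 : ℂ), (G ^ R) (uniformState N)⟫_ℂ‖ ^ 2 := by
  have hN0 : (0:ℝ) < N := by positivity
  have hN2 : (2:ℝ) ≤ N := by exact_mod_cast hN
  have hsqN : (0:ℝ) < Real.sqrt N := Real.sqrt_pos.2 hN0
  have hsqN1 : (1:ℝ) < Real.sqrt N := by
    rw [show (1:ℝ) = Real.sqrt 1 by simp]
    exact Real.sqrt_lt_sqrt (by norm_num) (by linarith)
  set a : ℝ := 1 / Real.sqrt N with ha_def
  have ha_pos : 0 < a := by positivity
  have ha_lt1 : a < 1 := by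
    rw [ha_def, div_lt_one hsqN]; exact hsqN1
  have ha_sq : a ^ 2 = 1 / N := by
    rw [ha_def, div_pow, one_pow, Real.sq_sqrt hN0.le]
  set θ : ℝ := Real.arcsin a with hθ_def
  have hsinθ : Real.sin θ = a := Real.sin_arcsin (by linarith) ha_lt1.le
  have hθpos : 0 < θ := Real.arcsin_pos.2 ha_pos
  have hθlt : θ < π / 2 := Real.arcsin_lt_pi_div_two.2 ha_lt1
  set c : ℝ := Real.cos θ with hc_def
  have hc_pos : 0 < c := Real.cos_pos_of_mem_Ioo ⟨by linarith, hθlt⟩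
  have hc_sq : c ^ 2 = 1 - a ^ 2 := by
    have := Real.sin_sq_add_cos_sq θ
    rw [hsinθ] at this; linarith
  set e : EuclideanSpace ℂ (Fin N) := EuclideanSpace.single m (1:ℂ) with he_def
  set s : EuclideanSpace ℂ (Fin N) := uniformState N with hs_def
  -- pointwise values
  have hs_apply : ∀ i, s i = (a : ℂ) := by
    intro i
    rw [hs_def, uniformState]
    simp only [PiLp.smul_apply, smul_eq_mul]
    rw [WithLp.ofLp_sum, Finset.sum_apply]
    simp [EuclideanSpace.single_apply, ha_def]
  have he_apply : ∀ i, e i = if i = m then 1 else 0 := by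
    intro i; rw [he_def]; exact EuclideanSpace.single_apply m 1 i
  -- inner products
  have hee : ⟪e, e⟫_ℂ = 1 := by
    rw [PiLp.inner_apply]
    simp [he_apply, apply_ite]
  have hes : ⟪e, s⟫_ℂ = (a : ℂ) := by
    rw [PiLp.inner_apply]
    simp [he_apply, hs_apply, apply_ite]
  have hse : ⟪s, e⟫_ℂ = (a : ℂ) := by
    rw [← inner_conj_symm, hes, Complex.conj_ofReal]
  have hss : ⟪s, s⟫_ℂ = 1 := by
    rw [PiLp.inner_apply]
    simp only [hs_apply, RCLike.inner_apply, Complex.conj_ofReal]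
    rw [Finset.sum_const, Finset.card_univ, Fintype.card_fin, nsmul_eq_mul]
    have hNa : (N:ℝ) * (a * a) = 1 := by
      have h := ha_sq
      have : a * a = 1 / N := by nlinarith
      rw [this]; field_simp
    push_cast
    exact_mod_cast congrArg (Complex.ofReal) hNa
  set w : EuclideanSpace ℂ (Fin N) := ((c:ℂ))⁻¹ • (s - (a:ℂ) • e) with hw_def
  have hcC : ((c:ℂ)) ≠ 0 := by exact_mod_cast (Complex.ofReal_ne_zero.2 hc_pos.ne')
  have hs_decomp : s = (a:ℂ) • e + (c:ℂ) • w := by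
    rw [hw_def, smul_smul, mul_inv_cancel₀ hcC, one_smul]; abel
  have hew : ⟪e, w⟫_ℂ = 0 := by
    rw [hw_def, inner_smul_right, inner_sub_right, inner_smul_right, hes, hee]
    ring
  have hwe : ⟪w, e⟫_ℂ = 0 := by
    rw [← inner_conj_symm, hew, map_zero]
  have hac_c : ((1 - a*a : ℝ):ℂ) = ((c*c : ℝ):ℂ) := by
    norm_cast; nlinarith
  have hsw : ⟪s, w⟫_ℂ = (c : ℂ) := by
    rw [hw_def, inner_smul_right, inner_sub_right, inner_smul_right, hss, hse]
    rw [show (1:ℂ) - (a:ℂ) * (a:ℂ) = (c:ℂ) * (c:ℂ) by push_cast at hac_c ⊢; linear_combination hac_c]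
    field_simp
  have hws : ⟪w, s⟫_ℂ = (c : ℂ) := by
    rw [← inner_conj_symm, hsw, Complex.conj_ofReal]
  have hinner_sub : ⟪s - (a:ℂ) • e, s - (a:ℂ) • e⟫_ℂ = ((c:ℂ))^2 := by
    rw [inner_sub_left, inner_sub_right, inner_sub_right, inner_smul_left,
      inner_smul_right, inner_smul_left, inner_smul_right, hss, hse, hes, hee,
      Complex.conj_ofReal]
    have hRe : ((1 - a*a : ℝ) : ℂ) = ((c^2 : ℝ):ℂ) := by norm_cast; nlinarith
    push_cast at hRe
    push_cast
    linear_combination hRe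
  have hww : ⟪w, w⟫_ℂ = 1 := by
    rw [hw_def, inner_smul_left, inner_smul_right, hinner_sub, map_inv₀,
      Complex.conj_ofReal]
    field_simp
  -- action of G
  have hproj : ∀ (ψ v : EuclideanSpace ℂ (Fin N)), proj ψ v = ⟪ψ, v⟫_ℂ • ψ := fun _ _ => rfl
  have hGv : ∀ v, G v = -v + (2*⟪e,v⟫_ℂ)•e + (2*⟪s,v⟫_ℂ - 4*⟪e,v⟫_ℂ*⟪s,e⟫_ℂ)•s := by
    intro v
    rw [hG]
    simp only [ContinuousLinearMap.neg_apply, ContinuousLinearMap.mul_apply,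
      ContinuousLinearMap.sub_apply, ContinuousLinearMap.one_apply,
      ContinuousLinearMap.smul_apply, hproj, inner_sub_right, inner_smul_right]
    module
  clear_value w s e c θ a
  have hcos2 : Real.cos (2*θ) = 1 - 2*a^2 := by
    rw [Real.cos_two_mul, ← hc_def]; nlinarith
  have hsin2 : Real.sin (2*θ) = 2*a*c := by
    rw [Real.sin_two_mul, hsinθ, ← hc_def]
  have hGe : G e = ((1 - 2*a^2 : ℝ):ℂ) • e - ((2*a*c : ℝ):ℂ) • w := by
    rw [hGv, hee, hse, hs_decomp]
    push_cast
    module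
  have hGw : G w = ((2*a*c : ℝ):ℂ) • e + ((1 - 2*a^2 : ℝ):ℂ) • w := by
    have hcc : ((1 - 2*a^2 : ℝ):ℂ) = ((2*c^2 - 1 : ℝ):ℂ) := by norm_cast; nlinarith
    rw [hGv, hew, hsw, hse, hs_decomp, hcc]
    push_cast
    module
  have hstep : ∀ φ : ℝ, G (((Real.sin φ : ℝ):ℂ) • e + ((Real.cos φ : ℝ):ℂ) • w)
      = ((Real.sin (φ + 2*θ) : ℝ):ℂ) • e + ((Real.cos (φ + 2*θ) : ℝ):ℂ) • w := by
    intro φ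
    rw [map_add, map_smul, map_smul, hGe, hGw, Real.sin_add, Real.cos_add, hcos2, hsin2]
    push_cast
    module
  have hiter : ∀ k : ℕ, (G ^ k) s
      = ((Real.sin ((2*k+1)*θ) : ℝ):ℂ) • e + ((Real.cos ((2*k+1)*θ) : ℝ):ℂ) • w := by
    intro k
    induction k with
    | zero =>
      simp only [pow_zero, ContinuousLinearMap.one_apply, Nat.cast_zero]
      rw [show (2*(0:ℝ)+1)*θ = θ by ring, hsinθ, ← hc_def]
      exact hs_decomp
    | succ k ih =>
      rw [pow_succ', ContinuousLinearMap.mul_apply, ih, hstep]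
      congr 2 <;> push_cast <;> ring_nf
  -- choose R
  set R : ℕ := ⌊π / (4*θ)⌋₊ with hR_def
  have hpos4θ : 0 < 4*θ := by linarith
  have hR_le : (R:ℝ) ≤ π / (4*θ) := Nat.floor_le (by positivity)
  have hR_gt : π / (4*θ) < R + 1 := Nat.lt_floor_add_one _
  clear_value R
  clear hR_def
  set φ : ℝ := (2*R+1)*θ with hφ_def
  clear_value φ
  have hφ_up : φ ≤ π/2 + θ := by
    have h0 : (R:ℝ)*(4*θ) ≤ π := (le_div_iff₀ hpos4θ).mp hR_le
    have h1 : (2*(R:ℝ)+1)*θ = (R:ℝ)*(4*θ)/2 + θ := by ring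
    rw [hφ_def, h1]; linarith
  have hφ_lo : π/2 - θ < φ := by
    have h1 : π < (4*θ) * ((R:ℝ)+1) := by
      rw [div_lt_iff₀ hpos4θ] at hR_gt; linarith
    have h2 : (4*θ)*((R:ℝ)+1) = 2*((2*(R:ℝ)+1)*θ) + 2*θ := by ring
    rw [hφ_def]; linarith
  set δ : ℝ := π/2 - φ with hδ_def
  clear_value δ
  have hδ_le : |δ| ≤ θ := by
    rw [abs_le]; constructor <;> [skip; skip] <;> rw [hδ_def] <;> linarith
  have hsinφ : Real.sin φ = Real.cos δ := by
    rw [show φ = π/2 - δ by rw [hδ_def]; ring, Real.sin_pi_div_two_sub]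
  have habs := abs_le.mp hδ_le
  have hcosδ : 0 ≤ Real.cos δ :=
    Real.cos_nonneg_of_mem_Icc ⟨by linarith, by linarith⟩
  have hsinδ_le : Real.sin δ ^ 2 ≤ a ^ 2 := by
    have hmono := Real.strictMonoOn_sin.monotoneOn
    have h1 : Real.sin δ ≤ Real.sin θ :=
      hmono ⟨by linarith, by linarith⟩ ⟨by linarith, by linarith⟩ habs.2
    have h2 : Real.sin (-θ) ≤ Real.sin δ :=
      hmono ⟨by linarith, by linarith⟩ ⟨by linarith, by linarith⟩ habs.1
    rw [Real.sin_neg, hsinθ] at h2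
    rw [hsinθ] at h1
    exact sq_le_sq' h2 h1
  have hcosδ_lb : 1 - Real.cos δ ≤ Real.sin δ ^ 2 := by
    have h1 : 0 ≤ 1 - Real.cos δ := by linarith [Real.cos_le_one δ]
    have hmul : 0 ≤ (1 - Real.cos δ) * Real.cos δ := mul_nonneg h1 hcosδ
    rw [show (1 - Real.cos δ) * Real.cos δ = Real.cos δ - Real.cos δ ^ 2 from by ring] at hmul
    have hp := Real.sin_sq_add_cos_sq δ
    linarith [hmul, hp]
  -- norms of e and w
  have he_norm : ‖e‖ = 1 := by rw [he_def, EuclideanSpace.norm_single]; norm_num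
  have hw_norm : ‖w‖ = 1 := by
    have h := @inner_self_eq_norm_sq ℂ _ _ _ _ w
    rw [hww] at h
    norm_num at h
    calc ‖w‖ = Real.sqrt (‖w‖^2) := (Real.sqrt_sq (norm_nonneg w)).symm
      _ = Real.sqrt 1 := by rw [h]
      _ = 1 := Real.sqrt_one
  have hkey : ∀ (x y : ℝ), ‖(x:ℂ) • e + (y:ℂ) • w‖ ^ 2 = x ^ 2 + y ^ 2 := by
    intro x y
    rw [norm_add_sq (𝕜 := ℂ)]
    rw [inner_smul_left, inner_smul_right, hew]
    simp [norm_smul, he_norm, hw_norm, Complex.norm_real, sq_abs]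
  -- the three conclusions
  refine ⟨R, ?_, ?_, ?_⟩
  · have hθ_ge : a ≤ θ := by
      calc a = Real.sin θ := hsinθ.symm
        _ ≤ θ := Real.sin_le hθpos.le
    have hθinv : 1/θ ≤ Real.sqrt N := by
      calc 1/θ ≤ 1/a := one_div_le_one_div_of_le ha_pos hθ_ge
        _ = Real.sqrt N := by rw [ha_def, one_div_one_div]
    calc (R:ℝ) ≤ π / (4*θ) := hR_le
      _ = π/4 * (1/θ) := by ring
      _ ≤ π/4 * Real.sqrt N :=
          mul_le_mul_of_nonneg_left hθinv (by positivity)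
  · have hval : (G ^ R) s - e
        = ((Real.sin φ - 1 : ℝ):ℂ) • e + ((Real.cos φ : ℝ):ℂ) • w := by
      rw [hiter R, ← hφ_def]
      push_cast
      module
    have hn2 : (Real.sin φ - 1)^2 + Real.cos φ ^ 2 ≤ (2 / Real.sqrt N)^2 := by
      have hpyth := Real.sin_sq_add_cos_sq φ
      have h1 : (Real.sin φ - 1)^2 + Real.cos φ ^ 2 = 2 - 2 * Real.sin φ := by
        linear_combination hpyth
      rw [h1, hsinφ]
      have h2 : 2 - 2 * Real.cos δ ≤ 2 * a ^ 2 := by linarith [hcosδ_lb, hsinδ_le]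
      have h3 : (2 / Real.sqrt N)^2 = 4 / N := by
        rw [div_pow, Real.sq_sqrt hN0.le]; norm_num
      rw [h3, ha_sq] at *
      have h4 : 2 * (1 / (N:ℝ)) ≤ 4 / N := by
        rw [mul_one_div]
        gcongr
        norm_num
      linarith
    have hnn : (0:ℝ) ≤ 2 / Real.sqrt N := by positivity
    have h4 : ‖(G ^ R) s - e‖^2 ≤ (2 / Real.sqrt N)^2 := by
      rw [hval, hkey]; exact hn2
    calc ‖(G ^ R) s - e‖ = Real.sqrt (‖(G ^ R) s - e‖^2) :=
          (Real.sqrt_sq (norm_nonneg _)).symm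
      _ ≤ Real.sqrt ((2 / Real.sqrt N)^2) := Real.sqrt_le_sqrt h4
      _ = 2 / Real.sqrt N := Real.sqrt_sq hnn
  · have hinner : ⟪e, (G ^ R) s⟫_ℂ = ((Real.sin φ : ℝ):ℂ) := by
      rw [hiter R, ← hφ_def, inner_add_right, inner_smul_right, inner_smul_right,
        hee, hew]
      ring
    rw [hinner]
    rw [Complex.norm_real, Real.norm_eq_abs, sq_abs]
    rw [hsinφ]
    have hp := Real.sin_sq_add_cos_sq δ
    rw [ha_sq] at hsinδ_le
    have h5 : (1:ℝ)/N ≤ 2/N := by gcongr <;> norm_num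
    linarith [hp, hsinδ_le, h5]
end

section
/- There exists a constant C > 0, independent of the dimension, such that for every nonzero finite-dimensional complex inner product space ℋ and all self-adjoint operators A, B on ℋ with ‖A‖ ≤ 1 and ‖B‖ ≤ 1, ‖exp(−i(A+B)) − exp(−iA)·exp(−iB)‖ ≤ C·‖A·B − B·A‖. -/
open NormedSpace
open scoped Nat

section Aux
variable {R : Type*} [NormedRing R] [NormedAlgebra ℝ R] [CompleteSpace R] [NormOneClass R]

lemma comm_pow_norm_le (M N : R) (hM : ‖M‖ ≤ 1) (n : ℕ) :
    ‖N * M ^ n - M ^ n * N‖ ≤ n * ‖M * N - N * M‖ := by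
  induction n with
  | zero => simp
  | succ n ih =>
    have key : N * M ^ (n + 1) - M ^ (n + 1) * N
        = (N * M ^ n - M ^ n * N) * M + M ^ n * (N * M - M * N) := by
      rw [pow_succ]; noncomm_ring
    have hpow : ‖M ^ n‖ ≤ 1 := (norm_pow_le M n).trans (pow_le_one₀ (norm_nonneg M) hM)
    have h1 : ‖(N * M ^ n - M ^ n * N) * M‖ ≤ n * ‖M * N - N * M‖ := by
      calc ‖(N * M ^ n - M ^ n * N) * M‖ ≤ ‖N * M ^ n - M ^ n * N‖ * ‖M‖ := norm_mul_le _ _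
        _ ≤ (n * ‖M * N - N * M‖) * 1 := by
            apply mul_le_mul ih hM (norm_nonneg _)
            positivity
        _ = n * ‖M * N - N * M‖ := mul_one _
    have h2 : ‖M ^ n * (N * M - M * N)‖ ≤ ‖M * N - N * M‖ := by
      calc ‖M ^ n * (N * M - M * N)‖ ≤ ‖M ^ n‖ * ‖N * M - M * N‖ := norm_mul_le _ _
        _ ≤ 1 * ‖M * N - N * M‖ := by rw [norm_sub_rev]; gcongr
        _ = _ := one_mul _
    calc ‖N * M ^ (n + 1) - M ^ (n + 1) * N‖
        ≤ ‖(N * M ^ n - M ^ n * N) * M‖ + ‖M ^ n * (N * M - M * N)‖ := by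
          rw [key]; exact norm_add_le _ _
      _ ≤ n * ‖M * N - N * M‖ + ‖M * N - N * M‖ := add_le_add h1 h2
      _ = (n + 1 : ℕ) * ‖M * N - N * M‖ := by push_cast; ring

lemma hasSum_exp_aux (x : ℝ) : HasSum (fun n : ℕ => x ^ n / n !) (Real.exp x) := by
  have := (NormedSpace.expSeries_div_summable x).hasSum
  rwa [Real.exp_eq_exp_ℝ, exp_eq_tsum_div]

lemma comm_exp_norm_le (M N : R) (hM : ‖M‖ ≤ 1) :
    ‖N * exp M - exp M * N‖ ≤ Real.exp 2 * ‖M * N - N * M‖ := by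
  have hsum := NormedSpace.expSeries_summable' (𝕂 := ℝ) M
  set L : R →L[ℝ] R := ContinuousLinearMap.mul ℝ R N - (ContinuousLinearMap.mul ℝ R).flip N with hLdef
  have hL : ∀ x : R, L x = N * x - x * N := fun x => by
    simp [hLdef]
  have key : N * exp M - exp M * N = ∑' n : ℕ, (n !⁻¹ : ℝ) • (N * M ^ n - M ^ n * N) := by
    rw [← hL]; simp only [exp_eq_tsum ℝ]; rw [L.map_tsum hsum]
    refine tsum_congr fun n => ?_
    rw [map_smul, hL]
  rw [key]
  have h2 : HasSum (fun n : ℕ => (2:ℝ) ^ n / n ! * ‖M * N - N * M‖)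
      (Real.exp 2 * ‖M * N - N * M‖) := (hasSum_exp_aux 2).mul_right _
  refine tsum_of_norm_bounded h2 fun n => ?_
  rw [norm_smul, Real.norm_eq_abs, abs_of_nonneg (by positivity)]
  have hn : (n : ℝ) ≤ 2 ^ n := by exact_mod_cast (Nat.lt_two_pow_self (n := n)).le
  calc (n !⁻¹ : ℝ) * ‖N * M ^ n - M ^ n * N‖
      ≤ (n !⁻¹ : ℝ) * (n * ‖M * N - N * M‖) := by
        gcongr; exact comm_pow_norm_le M N hM n
    _ ≤ (n !⁻¹ : ℝ) * (2 ^ n * ‖M * N - N * M‖) := by gcongr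
    _ = (2:ℝ) ^ n / n ! * ‖M * N - N * M‖ := by field_simp

lemma norm_exp_le_exp_norm (M : R) : ‖exp M‖ ≤ Real.exp ‖M‖ := by
  simp only [exp_eq_tsum ℝ]
  refine tsum_of_norm_bounded (hasSum_exp_aux ‖M‖) fun n => ?_
  rw [norm_smul, Real.norm_eq_abs, abs_of_nonneg (by positivity)]
  calc (n !⁻¹ : ℝ) * ‖M ^ n‖ ≤ (n !⁻¹ : ℝ) * ‖M‖ ^ n := by gcongr; exact norm_pow_le M n
    _ = ‖M‖ ^ n / n ! := by ring

end Aux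

set_option maxHeartbeats 1600000 in
set_option synthInstance.maxHeartbeats 400000 in
/-- Campbell–Baker–Hausdorff / Trotter-type error estimate: there is a
dimension-independent constant `C > 0` such that for all self-adjoint
operators `A`, `B` of norm at most `1` on a nonzero finite-dimensional complex
inner product space,
`‖exp(−i(A+B)) − exp(−iA)·exp(−iB)‖ ≤ C·‖AB − BA‖`. -/
theorem trotter_error_estimate :
    ∃ C : ℝ, 0 < C ∧
      ∀ (H : Type) [NormedAddCommGroup H] [InnerProductSpace ℂ H]
        [FiniteDimensional ℂ H] [Nontrivial H]
        (A B : H →L[ℂ] H), IsSelfAdjoint A → IsSelfAdjoint B →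
        ‖A‖ ≤ 1 → ‖B‖ ≤ 1 →
        ‖NormedSpace.exp ((-Complex.I) • (A + B)) -
            NormedSpace.exp ((-Complex.I) • A) * NormedSpace.exp ((-Complex.I) • B)‖ ≤
          C * ‖A * B - B * A‖ := by
  refine ⟨(Real.exp 2) ^ 3, by positivity, ?_⟩
  intro H _ _ _ _ A B _hA _hB hA1 hB1
  set Y : H →L[ℂ] H := (-Complex.I) • A with hYdef
  set Z : H →L[ℂ] H := (-Complex.I) • B with hZdef
  set X : H →L[ℂ] H := (-Complex.I) • (A + B) with hXdef
  have hXYZ : X = Y + Z := smul_add _ _ _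
  have hnY : ‖Y‖ ≤ 1 := by
    rw [hYdef, norm_smul (-Complex.I) A]; simpa using hA1
  have hnZ : ‖Z‖ ≤ 1 := by
    rw [hZdef, norm_smul (-Complex.I) B]; simpa using hB1
  have hnX : ‖X‖ ≤ 2 := by
    rw [hXdef, norm_smul (-Complex.I) (A + B), show ‖-Complex.I‖ = 1 by simp, one_mul]
    calc ‖A + B‖ ≤ ‖A‖ + ‖B‖ := norm_add_le _ _
      _ ≤ 2 := by linarith
  have hmul : ∀ P Q : H →L[ℂ] H,
      ((-Complex.I) • P) * ((-Complex.I) • Q) = (-1 : ℂ) • (P * Q) := by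
    intro P Q
    rw [smul_mul_assoc, mul_smul_comm, smul_smul]
    norm_num [Complex.I_mul_I]
  have hcomm : ‖Y * Z - Z * Y‖ = ‖A * B - B * A‖ := by
    rw [hYdef, hZdef, hmul, hmul, ← smul_sub, norm_smul (-1 : ℂ) (A * B - B * A)]
    simp
  set f : ℝ → (H →L[ℂ] H) := fun s =>
    exp ((1 - s) • X) * exp (s • Y) * exp (s • Z) with hfdef
  set g : ℝ → (H →L[ℂ] H) := fun s =>
    exp ((1 - s) • X) * (exp (s • Y) * Z - Z * exp (s • Y)) * exp (s • Z) with hgdef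
  have hderiv : ∀ s : ℝ, HasDerivAt f (g s) s := by
    intro s
    have hlin : HasDerivAt (fun u : ℝ => 1 - u) (-1 : ℝ) s := by
      simpa using (hasDerivAt_id s).const_sub (1 : ℝ)
    have d1 : HasDerivAt (fun u : ℝ => exp ((1 - u) • X))
        ((-1 : ℝ) • (exp ((1 - s) • X) * X)) s :=
      (hasDerivAt_exp_smul_const X (1 - s)).scomp s hlin
    have d2 : HasDerivAt (fun u : ℝ => exp (u • Y)) (exp (s • Y) * Y) s :=
      hasDerivAt_exp_smul_const Y s
    have d3 : HasDerivAt (fun u : ℝ => exp (u • Z)) (exp (s • Z) * Z) s :=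
      hasDerivAt_exp_smul_const Z s
    have hd : HasDerivAt f
        ((((-1 : ℝ) • (exp ((1 - s) • X) * X)) * exp (s • Y) +
            exp ((1 - s) • X) * (exp (s • Y) * Y)) * exp (s • Z) +
          exp ((1 - s) • X) * exp (s • Y) * (exp (s • Z) * Z)) s :=
      (d1.mul d2).mul d3
    have hY2 : exp (s • Y) * Y = Y * exp (s • Y) :=
      (((Commute.refl Y).smul_left s).exp_left).eq
    have hZ2 : exp (s • Z) * Z = Z * exp (s • Z) :=
      (((Commute.refl Z).smul_left s).exp_left).eq
    have hEq : g s = (((-1 : ℝ) • (exp ((1 - s) • X) * X)) * exp (s • Y) +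
            exp ((1 - s) • X) * (exp (s • Y) * Y)) * exp (s • Z) +
          exp ((1 - s) • X) * exp (s • Y) * (exp (s • Z) * Z) := by
      rw [hgdef]
      simp only [hY2, hZ2, hXYZ, neg_smul, one_smul]
      noncomm_ring
    rw [hEq]
    exact hd
  have hbound : ∀ s ∈ Set.Ico (0 : ℝ) 1, ‖g s‖ ≤ (Real.exp 2) ^ 3 * ‖A * B - B * A‖ := by
    intro s hs
    obtain ⟨hs0, hs1⟩ := hs
    have h1 : ‖exp ((1 - s) • X)‖ ≤ Real.exp 2 := by
      refine (norm_exp_le_exp_norm _).trans (Real.exp_le_exp.mpr ?_)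
      rw [norm_smul (1 - s) X, Real.norm_eq_abs, abs_of_nonneg (by linarith)]
      nlinarith [norm_nonneg X]
    have h3 : ‖exp (s • Z)‖ ≤ Real.exp 2 := by
      refine (norm_exp_le_exp_norm _).trans (Real.exp_le_exp.mpr ?_)
      rw [norm_smul s Z, Real.norm_eq_abs, abs_of_nonneg hs0]
      nlinarith [norm_nonneg Z]
    have hsY : ‖s • Y‖ ≤ 1 := by
      rw [norm_smul s Y, Real.norm_eq_abs, abs_of_nonneg hs0]
      nlinarith [norm_nonneg Y]
    have h2 : ‖exp (s • Y) * Z - Z * exp (s • Y)‖ ≤ Real.exp 2 * ‖A * B - B * A‖ := by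
      rw [norm_sub_rev]
      refine (comm_exp_norm_le _ _ hsY).trans ?_
      have hsm : (s • Y) * Z - Z * (s • Y) = s • (Y * Z - Z * Y) := by
        rw [smul_mul_assoc s Y Z, mul_smul_comm s Z Y, smul_sub]
      rw [hsm, norm_smul s (Y * Z - Z * Y), Real.norm_eq_abs, abs_of_nonneg hs0, hcomm]
      have hc : s * ‖A * B - B * A‖ ≤ ‖A * B - B * A‖ := by
        nlinarith [norm_nonneg (A * B - B * A)]
      exact mul_le_mul_of_nonneg_left hc (Real.exp_pos 2).le
    have hprod := mul_le_mul (mul_le_mul h1 h2 (norm_nonneg _) (Real.exp_pos 2).le) h3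
        (norm_nonneg _) (by positivity)
    calc ‖g s‖ ≤ ‖exp ((1 - s) • X) * (exp (s • Y) * Z - Z * exp (s • Y))‖ *
          ‖exp (s • Z)‖ := norm_mul_le _ _
      _ ≤ ‖exp ((1 - s) • X)‖ * ‖exp (s • Y) * Z - Z * exp (s • Y)‖ *
          ‖exp (s • Z)‖ :=
            mul_le_mul_of_nonneg_right (norm_mul_le _ _) (norm_nonneg _)
      _ ≤ Real.exp 2 * (Real.exp 2 * ‖A * B - B * A‖) * Real.exp 2 := hprod
      _ = (Real.exp 2) ^ 3 * ‖A * B - B * A‖ := by ring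
  have mv := norm_image_sub_le_of_norm_deriv_le_segment'
      (fun x _ => (hderiv x).hasDerivWithinAt) hbound 1 (by norm_num : (1 : ℝ) ∈ Set.Icc 0 1)
  have hf0 : f 0 = exp X := by simp [hfdef, exp_zero]
  have hf1 : f 1 = exp Y * exp Z := by simp [hfdef, exp_zero]
  calc ‖exp X - exp Y * exp Z‖ = ‖f 1 - f 0‖ := by rw [hf0, hf1, norm_sub_rev]
    _ ≤ (Real.exp 2) ^ 3 * ‖A * B - B * A‖ * (1 - 0) := mv
    _ = _ := by ring
end
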